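/- arXiv:1301.2976 — 2 statements merged into one kernel-verified Lean document; each statement's English description precedes it below -/
import Mathlib

section
/- Let the address space [0, 2^d) be partitioned into half-open segments assigned to peers, and let each peer's position be Pos of its segment. Then the set of positions occupied by peers whose positions lie in the subtree rooted at any fixed address x = p 1 0^k corresponds to a contiguous (cyclically contiguous) block of segments: the union of the address space segments of these peers is an interval of the address space. -/
/-- Number of trailing zero bits (2-adic valuation) of an address. -/
def tz (x : ℕ) : ℕ := padicValNat 2 x

/-- Clockwise descendant: `p 1 0^k ↦ p 1 1 0^(k-1)` (meaningful for `1 ≤ tz x`). -/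
def CW (x : ℕ) : ℕ := x + 2 ^ (tz x - 1)

/-- Counterclockwise descendant: `p 1 0^k ↦ p 0 1 0^(k-1)` (meaningful for `1 ≤ tz x`). -/
def CCW (x : ℕ) : ℕ := x - 2 ^ (tz x - 1)

/-- Parent map: `q c 1 0^m ↦ q 1 0^(m+1)`. -/
def UP (x : ℕ) : ℕ := x / 2 ^ (tz x + 2) * 2 ^ (tz x + 2) + 2 ^ (tz x + 1)

/-- One tree step from `a` to a child `b`. -/
def step (a b : ℕ) : Prop := 1 ≤ tz a ∧ (b = CW a ∨ b = CCW a)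

/-- The subtree of `x`: addresses reachable by repeated `CW`/`CCW`, including `x`. -/
def subtree (x : ℕ) : Set ℕ := {y | Relation.ReflTransGen step x y}

/-- `Pos a b = p 1 0^k` where `p` is the longest common binary prefix of `a` and `b`. -/
def Pos (a b : ℕ) : ℕ :=
  b / 2 ^ (Nat.log 2 (a ^^^ b) + 1) * 2 ^ (Nat.log 2 (a ^^^ b) + 1) + 2 ^ Nat.log 2 (a ^^^ b)
/-- Position of peer `i`: the peer whose segment contains the all-zero address (peer 0)
takes the root position 0; peer `i ≥ 1` with segment `(a (i-1), a i]` takes `Pos` of it. -/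
def pos (a : ℕ → ℕ) (i : ℕ) : ℕ := if i = 0 then 0 else Pos (a (i - 1)) (a i)
/-- Address space segment of peer `i`: peer 0 owns the wrap-around segment containing
the all-zero address; peer `i ≥ 1` owns `(a (i-1), a i]`. -/
def seg (d N : ℕ) (a : ℕ → ℕ) (i : ℕ) : Set ℕ :=
  if i = 0 then Set.Iic (a 0) ∪ Set.Ioo (a N) (2 ^ d) else Set.Ioc (a (i - 1)) (a i)

lemma tz_eq (q k : ℕ) : tz (q * 2^(k+1) + 2^k) = k := by
  have h : q * 2^(k+1) + 2^k = 2^k * (2*q+1) := by ring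
  rw [tz, h, padicValNat.mul (by positivity) (by omega),
    padicValNat.prime_pow, padicValNat.eq_zero_of_not_dvd (by omega)]
  omega

lemma tz_decomp' (x m : ℕ) (hx : x ≠ 0) (h : tz x = m) :
    ∃ q, x = q * 2^(m+1) + 2^m := by
  obtain ⟨c, hc⟩ := pow_padicValNat_dvd (p := 2) (n := x)
  rw [show padicValNat 2 x = m from h] at hc
  have hnd := pow_succ_padicValNat_not_dvd hx (p := 2)
  rw [show padicValNat 2 x = m from h] at hnd
  have hodd : ¬ 2 ∣ c := fun ⟨e, he⟩ => hnd ⟨e, by rw [hc, he]; ring⟩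
  obtain ⟨e, he⟩ : ∃ e, c = 2*e+1 := ⟨c/2, by omega⟩
  exact ⟨e, by rw [hc, he]; ring⟩

lemma subtree_subset_Ioo (p k : ℕ) :
    subtree (p*2^(k+1) + 2^k) ⊆ Set.Ioo (p*2^(k+1)) (p*2^(k+1)+2^(k+1)) := by
  intro y hy
  have key : p*2^(k+1) + 2^(tz y) ≤ y ∧ y + 2^(tz y) ≤ p*2^(k+1) + 2^(k+1) := by
    induction hy with
    | refl =>
      rw [tz_eq]
      have e1 : (2:ℕ)^(k+1) = 2*2^k := by ring
      omega
    | tail hab hstep ih =>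
      rename_i b c
      obtain ⟨hm1, hbc⟩ := hstep
      obtain ⟨n, hn⟩ : ∃ n, tz b = n + 1 := ⟨tz b - 1, by omega⟩
      have hb0 : b ≠ 0 := by
        have : (1:ℕ) ≤ 2^(tz b) := Nat.one_le_two_pow
        omega
      obtain ⟨q, hq⟩ := tz_decomp' b (n+1) hb0 hn
      rw [hn] at ih
      have h2n : 2^(tz b - 1) = 2^n := by rw [hn]; norm_num
      have e1 : (2:ℕ)^(n+1) = 2*2^n := by ring
      have e2 : (2:ℕ)^(n+1+1) = 2*2^(n+1) := by ring
      rcases hbc with h | h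
      · -- CW
        have hc : c = (2*q+1)*2^(n+1) + 2^n := by rw [h, CW, h2n, hq]; ring
        have htc : tz c = n := by rw [hc]; exact tz_eq _ n
        have h1 : (2*q+1)*2^(n+1) = q*2^(n+1+1) + 2^(n+1) := by ring
        rw [htc]
        omega
      · -- CCW
        have hc : c = (2*q)*2^(n+1) + 2^n := by
          rw [h, CCW, h2n, hq]
          have h1 : q * 2^(n+1+1) = (2*q)*2^(n+1) := by ring
          omega
        have htc : tz c = n := by rw [hc]; exact tz_eq _ n
        have h1 : (2*q)*2^(n+1) = q*2^(n+1+1) := by ring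
        rw [htc]
        omega
  have : (1:ℕ) ≤ 2^(tz y) := Nat.one_le_two_pow
  constructor <;> omega

lemma Ioo_subset_subtree : ∀ k p : ℕ,
    Set.Ioo (p*2^(k+1)) (p*2^(k+1)+2^(k+1)) ⊆ subtree (p*2^(k+1) + 2^k) := by
  intro k
  induction k with
  | zero =>
    intro p y hy
    obtain ⟨h1, h2⟩ := hy
    have : y = p*2^(0+1) + 2^0 := by norm_num at h1 h2 ⊢; omega
    rw [this]
    exact Relation.ReflTransGen.refl
  | succ k ih =>
    intro p y hy
    obtain ⟨h1, h2⟩ := hy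
    have htz : tz (p*2^(k+1+1) + 2^(k+1)) = k+1 := tz_eq p (k+1)
    have h2n : 2^(tz (p*2^(k+1+1) + 2^(k+1)) - 1) = 2^k := by rw [htz]; norm_num
    have e1 : (2:ℕ)^(k+1) = 2*2^k := by ring
    have e2 : (2:ℕ)^(k+1+1) = 2*2^(k+1) := by ring
    have hBB : p * 2^(k+1+1) = (2*p)*2^(k+1) := by ring
    set x := p*2^(k+1+1) + 2^(k+1) with hx
    rcases lt_trichotomy y x with h | h | h
    · -- go CCW
      have hstep : step x (CCW x) := ⟨by rw [htz]; omega, Or.inr rfl⟩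
      have hccw : CCW x = (2*p)*2^(k+1) + 2^k := by
        rw [CCW, h2n, hx]; omega
      have hmem : y ∈ Set.Ioo ((2*p)*2^(k+1)) ((2*p)*2^(k+1)+2^(k+1)) := by
        constructor <;> omega
      have := ih (2*p) hmem
      rw [← hccw] at this
      exact Relation.ReflTransGen.head hstep this
    · exact h ▸ Relation.ReflTransGen.refl
    · -- go CW
      have hstep : step x (CW x) := ⟨by rw [htz]; omega, Or.inl rfl⟩
      have hcw : CW x = (2*p+1)*2^(k+1) + 2^k := by
        rw [CW, h2n, hx]
        have : (2*p+1)*2^(k+1) = p*2^(k+1+1) + 2^(k+1) := by ring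
        omega
      have hmem : y ∈ Set.Ioo ((2*p+1)*2^(k+1)) ((2*p+1)*2^(k+1)+2^(k+1)) := by
        have : (2*p+1)*2^(k+1) = p*2^(k+1+1) + 2^(k+1) := by ring
        constructor <;> omega
      have := ih (2*p+1) hmem
      rw [← hcw] at this
      exact Relation.ReflTransGen.head hstep this

lemma subtree_eq (p k : ℕ) :
    subtree (p*2^(k+1) + 2^k) = Set.Ioo (p*2^(k+1)) (p*2^(k+1)+2^(k+1)) :=
  le_antisymm (subtree_subset_Ioo p k) (Ioo_subset_subtree k p)

lemma Pos_struct (c b : ℕ) (h : c < b) : ∃ L q,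
    Pos c b = q*2^(L+1) + 2^L ∧ q*2^(L+1) ≤ c ∧ c < Pos c b ∧
    Pos c b ≤ b ∧ b < (q+1)*2^(L+1) := by
  set L := Nat.log 2 (c ^^^ b) with hL
  set v := c ^^^ b with hv
  have hvne : v ≠ 0 := by
    rw [hv, Ne, xor_eq_zero_iff]; omega
  have hv1 : 2^L ≤ v := Nat.pow_log_le_self 2 hvne
  have hv2 : v < 2^(L+1) := Nat.lt_pow_succ_log_self (by norm_num) v
  have e1 : (2:ℕ)^(L+1) = 2*2^L := by ring
  have hhi : ∀ j, L < j → c.testBit j = b.testBit j := by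
    intro j hj
    have hvj : v.testBit j = false :=
      Nat.testBit_lt_two_pow (lt_of_lt_of_le hv2 (Nat.pow_le_pow_right (by norm_num) hj))
    have hx := Nat.testBit_xor c b j
    rw [← hv, hvj] at hx
    cases hc : c.testBit j <;> cases hb : b.testBit j <;>
      simp only [hc, hb] at hx ⊢ <;> first | rfl | simp at hx
  have hvL : v.testBit L = true := by
    rw [Nat.testBit_eq_decide_div_mod_eq]
    have : v / 2^L = 1 := Nat.div_eq_of_lt_le (by omega) (by
      have e : (1+1)*2^L = 2^(L+1) := by ring
      omega)
    simp [this]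
  have hbcL : b.testBit L = true ∧ c.testBit L = false := by
    have hx := Nat.testBit_xor c b L
    rw [← hv, hvL] at hx
    cases hcL : c.testBit L <;> cases hbL : b.testBit L <;> simp [hcL, hbL] at hx ⊢
    exact absurd (Nat.lt_of_testBit L (by simp [hbL]) (by simp [hcL]) fun j hj => (hhi j hj).symm) (by omega)
  have hq : c / 2^(L+1) = b / 2^(L+1) := by
    rw [← Nat.shiftRight_eq_div_pow, ← Nat.shiftRight_eq_div_pow]
    apply Nat.eq_of_testBit_eq
    intro i
    rw [Nat.testBit_shiftRight, Nat.testBit_shiftRight]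
    exact hhi _ (by omega)
  have hmodb : 2^L ≤ b % 2^(L+1) := by
    have h1 : b / 2^L % 2 = 1 := by
      have := hbcL.1; rw [Nat.testBit_eq_decide_div_mod_eq] at this; simpa using this
    have h2 := Nat.mod_pow_succ (x := b) (b := 2) (k := L)
    rw [h1] at h2
    omega
  have hmodc : c % 2^(L+1) < 2^L := by
    have h1 : c / 2^L % 2 = 0 := by
      have := hbcL.2; rw [Nat.testBit_eq_decide_div_mod_eq] at this; simpa using this
    have h2 := Nat.mod_pow_succ (x := c) (b := 2) (k := L)
    rw [h1] at h2
    have h3 : c % 2^L < 2^L := Nat.mod_lt _ (by positivity)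
    omega
  have hbdm : b / 2^(L+1) * 2^(L+1) + b % 2^(L+1) = b := by
    rw [mul_comm]; exact Nat.div_add_mod b _
  have hcdm : c / 2^(L+1) * 2^(L+1) + c % 2^(L+1) = c := by
    rw [mul_comm]; exact Nat.div_add_mod c _
  have hmodb2 : b % 2^(L+1) < 2^(L+1) := Nat.mod_lt _ (by positivity)
  refine ⟨L, b / 2^(L+1), rfl, ?_, ?_, ?_, ?_⟩
  · rw [← hq]
    have := Nat.div_mul_le_self c (2^(L+1))
    omega
  · show c < b / 2 ^ (L+1) * 2^(L+1) + 2^L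
    rw [← hq]; omega
  · show b / 2 ^ (L+1) * 2^(L+1) + 2^L ≤ b
    omega
  · have : (b / 2^(L+1) + 1) * 2^(L+1) = b / 2^(L+1) * 2^(L+1) + 2^(L+1) := by ring
    omega

lemma Pos_mem_iff (c b p k : ℕ) (h : c < b) :
    Pos c b ∈ Set.Ioo (p*2^(k+1)) (p*2^(k+1)+2^(k+1)) ↔
      p*2^(k+1) ≤ c ∧ b < p*2^(k+1)+2^(k+1) := by
  obtain ⟨L, q, hPos, hqc, hcP, hPb, hbq⟩ := Pos_struct c b h
  constructor
  · rintro ⟨h1, h2⟩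
    have hLk : L ≤ k := by
      by_contra hLk
      push_neg at hLk
      have hdvd : 2^(k+1) ∣ Pos c b := by
        rw [hPos]
        exact Nat.dvd_add (Dvd.dvd.mul_left (pow_dvd_pow 2 (by omega)) q)
          (pow_dvd_pow 2 (by omega))
      obtain ⟨n, hn⟩ := hdvd
      rw [hn] at h1 h2
      have e : p*2^(k+1)+2^(k+1) = (p+1)*2^(k+1) := by ring
      rw [e] at h2
      rw [mul_comm (2^(k+1)) n] at h1 h2
      have g1 : p < n := lt_of_mul_lt_mul_right h1 (Nat.zero_le _)
      have g2 : n < p+1 := lt_of_mul_lt_mul_right h2 (Nat.zero_le _)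
      omega
    have hsplit : (2:ℕ)^(k+1) = 2^(k-L)*2^(L+1) := by
      rw [← pow_add]; congr 1; omega
    set E := (2:ℕ)^(L+1) with hE
    set D := (2:ℕ)^(k-L) with hD
    have hD1 : 1 ≤ D := Nat.one_le_two_pow
    have hlo : p*2^(k+1) = (p*D)*E := by rw [hsplit]; ring
    have hhi : p*2^(k+1)+2^(k+1) = (p*D+D)*E := by rw [hsplit]; ring
    have h2L : 2^L < E := by
      have : E = 2*2^L := by rw [hE]; ring
      omega
    have hMq : p*D < q+1 := by
      refine lt_of_mul_lt_mul_right ?_ (Nat.zero_le E)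
      calc p*D*E < Pos c b := by rw [← hlo]; exact h1
        _ < (q+1)*E := by rw [hPos]; have : (q+1)*E = q*E+E := by ring
                          omega
    have hqMD : q < p*D+D := by
      refine lt_of_mul_lt_mul_right ?_ (Nat.zero_le E)
      calc q*E ≤ Pos c b := by rw [hPos]; omega
        _ < (p*D+D)*E := by rw [← hhi]; exact h2
    constructor
    · calc p*2^(k+1) = (p*D)*E := hlo
        _ ≤ q*E := Nat.mul_le_mul_right E (by omega)
        _ ≤ c := hqc
    · calc b < (q+1)*E := hbq
        _ ≤ (p*D+D)*E := Nat.mul_le_mul_right E (by omega)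
        _ = p*2^(k+1)+2^(k+1) := hhi.symm
  · rintro ⟨h1, h2⟩
    exact ⟨lt_of_le_of_lt h1 hcP, lt_of_le_of_lt hPb h2⟩

lemma union_Ioc (a : ℕ → ℕ) (N : ℕ) (hmono : StrictMonoOn a (Set.Iic N))
    (s t : ℕ) (hs : 1 ≤ s) (hst : s ≤ t) (htN : t ≤ N) :
    ⋃ i ∈ Set.Icc s t, Set.Ioc (a (i-1)) (a i) = Set.Ioc (a (s-1)) (a t) := by
  classical
  have hmo : MonotoneOn a (Set.Iic N) := hmono.monotoneOn
  ext y
  simp only [Set.mem_iUnion, Set.mem_Ioc, Set.mem_Icc, exists_prop]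
  constructor
  · rintro ⟨i, ⟨hsi, hit⟩, h1, h2⟩
    exact ⟨lt_of_le_of_lt (hmo (by simp; omega) (by simp; omega) (by omega)) h1,
      le_trans h2 (hmo (by simp; omega) (by simp; omega) hit)⟩
  · rintro ⟨h1, h2⟩
    have hex : ∃ i, s ≤ i ∧ i ≤ t ∧ y ≤ a i := ⟨t, hst, le_refl t, h2⟩
    obtain ⟨hi1, hi2, hi3⟩ := Nat.find_spec hex
    refine ⟨Nat.find hex, ⟨hi1, hi2⟩, ?_, hi3⟩
    rcases eq_or_lt_of_le hi1 with he | hlt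
    · rw [← he]; exact h1
    · have hm := Nat.find_min hex (m := Nat.find hex - 1) (by omega)
      push_neg at hm
      exact hm (by omega) (by omega)

/-- Lemma 1: the union of the address space segments of the peers whose
positions lie in the subtree of a fixed address `x = p 1 0^k` is an interval of the
address space. -/
theorem stmt10 (d N : ℕ) (a : ℕ → ℕ) (hN : 1 ≤ N)
    (hmono : StrictMonoOn a (Set.Iic N)) (hlt : a N < 2 ^ d)
    (p k x : ℕ) (hxdef : x = p * 2 ^ (k + 1) + 2 ^ k) (hx : x < 2 ^ d) :
    ∃ lo hi, (⋃ i ∈ {i | i ≤ N ∧ pos a i ∈ subtree x}, seg d N a i) = Set.Ioc lo hi := by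
  classical
  subst hxdef
  have hmo : MonotoneOn a (Set.Iic N) := hmono.monotoneOn
  have hsub := subtree_eq p k
  have key : ∀ i, (i ≤ N ∧ pos a i ∈ subtree (p*2^(k+1) + 2^k)) ↔
      (1 ≤ i ∧ i ≤ N ∧ p*2^(k+1) ≤ a (i-1) ∧ a i < p*2^(k+1)+2^(k+1)) := by
    intro i
    rcases Nat.eq_zero_or_pos i with rfl | hi
    · simp [pos, hsub]
    · by_cases hiN : i ≤ N
      · have hab : a (i-1) < a i := hmono (by simp; omega) (by simp; omega) (by omega)
        simp only [pos, if_neg (by omega : ¬ i = 0), hsub]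
        constructor
        · rintro ⟨-, hmem⟩
          have := (Pos_mem_iff _ _ p k hab).mp hmem
          exact ⟨by omega, hiN, this.1, this.2⟩
        · rintro ⟨-, -, g1, g2⟩
          exact ⟨hiN, (Pos_mem_iff _ _ p k hab).mpr ⟨g1, g2⟩⟩
      · constructor
        · rintro ⟨hc, -⟩; omega
        · rintro ⟨-, hc, -⟩; omega
  by_cases hex : ∃ i, 1 ≤ i ∧ i ≤ N ∧ p*2^(k+1) ≤ a (i-1) ∧ a i < p*2^(k+1)+2^(k+1)
  · set S : Finset ℕ := (Finset.Icc 1 N).filter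
      (fun i => p*2^(k+1) ≤ a (i-1) ∧ a i < p*2^(k+1)+2^(k+1)) with hS
    have hSne : S.Nonempty := by
      obtain ⟨i, h1, h2, h3, h4⟩ := hex
      exact ⟨i, by simp [hS, Finset.mem_filter, Finset.mem_Icc]; exact ⟨⟨h1, h2⟩, h3, h4⟩⟩
    set s := S.min' hSne with hsmin
    set t := S.max' hSne with htmax
    have hmemS : ∀ j, j ∈ S ↔ (1 ≤ j ∧ j ≤ N ∧ p*2^(k+1) ≤ a (j-1) ∧ a j < p*2^(k+1)+2^(k+1)) := by
      intro j
      simp [hS, Finset.mem_filter, Finset.mem_Icc, and_assoc]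
    have hsS := (hmemS s).mp (S.min'_mem hSne)
    have htS := (hmemS t).mp (S.max'_mem hSne)
    have hst : s ≤ t := S.min'_le t (S.max'_mem hSne)
    have hset : {i | i ≤ N ∧ pos a i ∈ subtree (p*2^(k+1) + 2^k)} = Set.Icc s t := by
      ext i
      rw [Set.mem_setOf_eq, key i, Set.mem_Icc]
      constructor
      · intro hC
        have hiS : i ∈ S := (hmemS i).mpr hC
        exact ⟨S.min'_le i hiS, S.le_max' i hiS⟩
      · rintro ⟨h1, h2⟩
        refine ⟨by omega, by omega, ?_, ?_⟩
        · exact le_trans hsS.2.2.1 (hmo (by simp; omega) (by simp; omega) (by omega))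
        · exact lt_of_le_of_lt (hmo (by simp; omega) (by simp; omega) h2) htS.2.2.2
    rw [hset]
    have hcong : (⋃ i ∈ Set.Icc s t, seg d N a i) =
        ⋃ i ∈ Set.Icc s t, Set.Ioc (a (i-1)) (a i) := by
      apply Set.iUnion₂_congr
      intro i hi
      rw [Set.mem_Icc] at hi
      rw [seg, if_neg (by omega : ¬ i = 0)]
    refine ⟨a (s-1), a t, ?_⟩
    rw [hcong, union_Ioc a N hmono s t hsS.1 hst htS.2.1]
  · refine ⟨0, 0, ?_⟩
    have hempty : {i | i ≤ N ∧ pos a i ∈ subtree (p*2^(k+1) + 2^k)} = ∅ := by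
      ext i
      simp only [Set.mem_setOf_eq, Set.mem_empty_iff_false, iff_false]
      intro hc
      exact hex ⟨i, (key i).mp hc⟩
    rw [hempty]
    simp
end

section
/- If an address x = p 1 0^k is not occupied by any peer, i.e., x lies in the segment (a,b] of a peer whose position Pos(a,b) ≠ x, then at most one of the two subtrees rooted at CW[x] and CCW[x] contains a position occupied by some peer whose position lies strictly below x. More precisely: x cannot be the lowest common ancestor of two occupied positions lying in its two different child subtrees unless x itself is occupied. -/
lemma tz_form (c t : ℕ) : tz (c * 2 ^ (t + 1) + 2 ^ t) = t := by
  have h : c * 2 ^ (t + 1) + 2 ^ t = 2 ^ t * (2 * c + 1) := by ring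
  have h2 : ¬ (2 ∣ (2 * c + 1)) := by omega
  rw [tz, h, padicValNat.mul (by positivity) (by omega), padicValNat.prime_pow,
    padicValNat.eq_zero_of_not_dvd h2, Nat.add_zero]

lemma mid_eq {t c w : ℕ} (hd : 2 ^ t ∣ w) (h1 : c * 2 ^ t < w) (h2 : w < (c + 2) * 2 ^ t) :
    w = (c + 1) * 2 ^ t := by
  obtain ⟨e, he⟩ := hd
  have he' : w = e * 2 ^ t := by rw [he, mul_comm]
  have ht : (0:ℕ) < 2 ^ t := by positivity
  have hce : c < e := by
    have h1' : c * 2 ^ t < e * 2 ^ t := he' ▸ h1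
    exact Nat.lt_of_mul_lt_mul_right h1'
  have hec : e < c + 2 := by
    have h2' : e * 2 ^ t < (c + 2) * 2 ^ t := he' ▸ h2
    exact Nat.lt_of_mul_lt_mul_right h2'
  rw [he', show e = c + 1 by omega]

lemma no_mid {t c w : ℕ} (hd : 2 ^ t ∣ w) (h1 : c * 2 ^ t < w) (h2 : w < (c + 1) * 2 ^ t) :
    False := by
  obtain ⟨e, he⟩ := hd
  have he' : w = e * 2 ^ t := by rw [he, mul_comm]
  have hce : c < e := Nat.lt_of_mul_lt_mul_right (he' ▸ h1 : c * 2 ^ t < e * 2 ^ t)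
  have hec : e < c + 1 := Nat.lt_of_mul_lt_mul_right (he' ▸ h2 : e * 2 ^ t < (c + 1) * 2 ^ t)
  omega

lemma bit_split (A L : ℕ) :
    (A % 2 ^ (L + 1) < 2 ^ L ∧ A / 2 ^ L % 2 = 0) ∨
    (2 ^ L ≤ A % 2 ^ (L + 1) ∧ A / 2 ^ L % 2 = 1) := by
  have hP : (0:ℕ) < 2 ^ L := by positivity
  have h1 : A % 2 ^ (L + 1) / 2 ^ L = A / 2 ^ L % 2 := by
    rw [pow_succ]; exact Nat.mod_mul_right_div_self A (2 ^ L) 2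
  have h3 := Nat.div_add_mod (A % 2 ^ (L + 1)) (2 ^ L)
  have h4 : A % 2 ^ (L + 1) % 2 ^ L < 2 ^ L := Nat.mod_lt _ hP
  have h5 : A / 2 ^ L % 2 < 2 := Nat.mod_lt _ (by norm_num)
  rcases (show A % 2 ^ (L + 1) / 2 ^ L = 0 ∨ A % 2 ^ (L + 1) / 2 ^ L = 1 by omega) with h | h
  · left
    rw [h, Nat.mul_zero, Nat.zero_add] at h3
    rw [← h1, h]
    omega
  · right
    rw [h, Nat.mul_one] at h3
    rw [← h1, h]
    omega

lemma pos_key {A B : ℕ} (hab : A < B) :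
    (A < Pos A B ∧ Pos A B ≤ B) ∧ 2 ^ Nat.log 2 (A ^^^ B) ∣ Pos A B ∧
      ∀ z, A < z → z ≤ B → ¬ 2 ^ (Nat.log 2 (A ^^^ B) + 1) ∣ z := by
  set L := Nat.log 2 (A ^^^ B) with hL
  have hne : A ^^^ B ≠ 0 := by
    intro h
    exact absurd (by simpa [Nat.xor_xor_cancel_left] using congrArg (A ^^^ ·) h : B = A).symm hab.ne
  have hv1 : 2 ^ L ≤ A ^^^ B := Nat.pow_log_le_self 2 hne
  have hv2 : A ^^^ B < 2 ^ (L + 1) := Nat.lt_pow_succ_log_self (by norm_num) _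
  have hP1 : (0:ℕ) < 2 ^ L := by positivity
  have hP2 : (0:ℕ) < 2 ^ (L + 1) := by positivity
  -- equal high parts
  have hqeq : A / 2 ^ (L + 1) = B / 2 ^ (L + 1) := by
    apply Nat.eq_of_testBit_eq
    intro i
    rw [← Nat.shiftRight_eq_div_pow, ← Nat.shiftRight_eq_div_pow,
      Nat.testBit_shiftRight, Nat.testBit_shiftRight]
    have h2 : (A ^^^ B).testBit (L + 1 + i) = false :=
      Nat.testBit_lt_two_pow (lt_of_lt_of_le hv2 (Nat.pow_le_pow_right (by norm_num) (by omega)))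
    rw [Nat.testBit_xor] at h2
    revert h2
    cases A.testBit (L + 1 + i) <;> cases B.testBit (L + 1 + i) <;> simp
  -- differing bit at L
  have hvdiv : (A ^^^ B) / 2 ^ L = 1 := by
    have hlo : 1 ≤ (A ^^^ B) / 2 ^ L := (Nat.one_le_div_iff hP1).mpr (by omega)
    have hhi : (A ^^^ B) / 2 ^ L < 2 := by
      rw [Nat.div_lt_iff_lt_mul hP1]
      calc A ^^^ B < 2 ^ (L + 1) := hv2
        _ = 2 * 2 ^ L := by rw [pow_succ]; ring
    omega
  have hbitne : A / 2 ^ L % 2 ≠ B / 2 ^ L % 2 := by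
    intro h
    have hx1 : (A ^^^ B).testBit L = true := by
      rw [Nat.testBit_eq_decide_div_mod_eq, hvdiv]
      simp
    rw [Nat.testBit_xor, Nat.testBit_eq_decide_div_mod_eq, Nat.testBit_eq_decide_div_mod_eq, h] at hx1
    simp at hx1
  -- arithmetic decomposition
  have hA' : 2 ^ (L + 1) * (B / 2 ^ (L + 1)) + A % 2 ^ (L + 1) = A := by
    rw [← hqeq]; exact Nat.div_add_mod A (2 ^ (L + 1))
  have hB' : 2 ^ (L + 1) * (B / 2 ^ (L + 1)) + B % 2 ^ (L + 1) = B := Nat.div_add_mod B (2 ^ (L + 1))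
  have hPosEq : Pos A B = 2 ^ (L + 1) * (B / 2 ^ (L + 1)) + 2 ^ L := by
    rw [Pos, ← hL, mul_comm]
  have hdvd : 2 ^ L ∣ Pos A B := by
    rw [hPosEq]
    exact ⟨2 * (B / 2 ^ (L + 1)) + 1, by rw [pow_succ]; ring⟩
  have hbnds : A < Pos A B ∧ Pos A B ≤ B := by
    rcases bit_split A L with ⟨hA1, hA2⟩ | ⟨hA1, hA2⟩ <;>
      rcases bit_split B L with ⟨hB1, hB2⟩ | ⟨hB1, hB2⟩
    · omega
    · rw [hPosEq]; omega
    · omega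
    · omega
  refine ⟨hbnds, hdvd, ?_⟩
  rintro z hz1 hz2 ⟨e, rfl⟩
  have hqle : 2 ^ (L + 1) * (B / 2 ^ (L + 1)) ≤ A := by
    have := Nat.mod_lt A hP2
    omega
  have h1 : B / 2 ^ (L + 1) < e := by
    apply Nat.lt_of_mul_lt_mul_left (a := 2 ^ (L + 1))
    omega
  have h2 : 2 ^ (L + 1) * e ≤ 2 ^ (L + 1) * (B / 2 ^ (L + 1)) + B % 2 ^ (L + 1) := by
    rw [hB']; exact hz2
  have h3 : 2 ^ (L + 1) * (B / 2 ^ (L + 1) + 1) ≤ 2 ^ (L + 1) * e :=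
    Nat.mul_le_mul_left _ (by omega)
  have h4 := Nat.mod_lt B hP2
  rw [Nat.mul_add, Nat.mul_one] at h3
  omega

lemma seg_pos {A B x pp kk : ℕ} (hxe : x = pp * 2 ^ (kk + 1) + 2 ^ kk)
    (hab : A < B) (h1 : A < x) (h2 : x ≤ B) :
    2 ^ kk ∣ Pos A B ∧ A < Pos A B ∧ Pos A B ≤ B := by
  obtain ⟨⟨hlt, hle⟩, hdvd, hmax⟩ := pos_key hab
  have hkL : kk ≤ Nat.log 2 (A ^^^ B) := by
    by_contra h
    push_neg at h
    refine hmax x h1 h2 ?_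
    refine (pow_dvd_pow 2 (by omega : Nat.log 2 (A ^^^ B) + 1 ≤ kk)).trans ?_
    exact ⟨2 * pp + 1, by rw [hxe, pow_succ]; ring⟩
  exact ⟨(pow_dvd_pow 2 hkL).trans hdvd, hlt, hle⟩

lemma subtree_bound {y z : ℕ} (h : Relation.ReflTransGen step y z) :
    0 < y → y - 2 ^ tz y < z ∧ z < y + 2 ^ tz y := by
  induction h using Relation.ReflTransGen.head_induction_on with
  | refl =>
    intro hz
    have h0 : (0:ℕ) < 2 ^ tz z := by positivity
    omega
  | @head b c h' hrest ih =>
    intro hb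
    obtain ⟨hm, hcc⟩ := h'
    set m := tz b with hmdef
    have hdvd : 2 ^ m ∣ b := pow_padicValNat_dvd
    obtain ⟨s, hs⟩ : ∃ s, b = 2 ^ m * (s + 1) := by
      obtain ⟨t, ht⟩ := hdvd
      cases t with
      | zero => rw [ht] at hb; simp at hb
      | succ s => exact ⟨s, ht⟩
    have hEpos : (0:ℕ) < 2 ^ (m - 1) := by positivity
    have hmsplit : (2:ℕ) ^ m = 2 ^ (m - 1) + 2 ^ (m - 1) := by
      conv_lhs => rw [show m = (m - 1) + 1 by omega]
      rw [pow_succ]; ring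
    have hbm : 2 ^ m ≤ b := Nat.le_of_dvd hb hdvd
    rcases hcc with hcw | hccw
    · have hceq : c = b + 2 ^ (m - 1) := by rw [hcw, CW, ← hmdef]
      have htzc : tz c = m - 1 := by
        have h := tz_form (s + 1) (m - 1)
        rw [show (m - 1) + 1 = m by omega] at h
        rw [show c = (s + 1) * 2 ^ m + 2 ^ (m - 1) from by rw [hceq, hs]; ring]
        exact h
      have ih' := ih (by omega)
      rw [htzc] at ih'
      omega
    · have hceq : c = b - 2 ^ (m - 1) := by rw [hccw, CCW, ← hmdef]
      have hcform : c = s * 2 ^ m + 2 ^ (m - 1) := by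
        rw [hceq, Nat.sub_eq_iff_eq_add (by omega), hs, hmsplit]
        ring
      have htzc : tz c = m - 1 := by
        have h := tz_form s (m - 1)
        rw [show (m - 1) + 1 = m by omega] at h
        rw [hcform]
        exact h
      have hc0 : 0 < c := by rw [hcform]; positivity
      have ih' := ih hc0
      rw [htzc] at ih'
      omega

/-- if the address `x = p 1 0^k` (`k ≥ 1`) is not occupied by any peer,
then the subtrees of `CW[x]` and `CCW[x]` cannot both contain occupied positions:
`x` cannot be the lowest common ancestor of two occupied positions in its two child
subtrees unless `x` itself is occupied. -/
theorem stmt12 (d N : ℕ) (a : ℕ → ℕ) (hN : 1 ≤ N)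
    (hmono : StrictMonoOn a (Set.Iic N)) (hlt : a N < 2 ^ d)
    (p k x : ℕ) (hk : 1 ≤ k) (hxdef : x = p * 2 ^ (k + 1) + 2 ^ k) (hx : x < 2 ^ d)
    (hnotocc : ¬ ∃ i ≤ N, pos a i = x) :
    ¬ ∃ i j, i ≤ N ∧ j ≤ N ∧ pos a i ∈ subtree (CW x) ∧ pos a j ∈ subtree (CCW x) := by
  rintro ⟨i, j, hiN, hjN, hvi, hvj⟩
  have hmono' : ∀ {s t : ℕ}, s ≤ t → t ≤ N → a s ≤ a t := by
    intro s t hst htN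
    rcases eq_or_lt_of_le hst with rfl | h
    · exact le_rfl
    · exact (hmono (Set.mem_Iic.mpr (le_trans hst htN)) (Set.mem_Iic.mpr htN) h).le
  have hmonolt : ∀ {s t : ℕ}, s < t → t ≤ N → a s < a t := fun {s t} hst htN =>
    hmono (Set.mem_Iic.mpr (le_trans hst.le htN)) (Set.mem_Iic.mpr htN) hst
  obtain ⟨X0, hX0def⟩ : ∃ X0, X0 = 2 * p * 2 ^ k := ⟨_, rfl⟩
  have hE : (0:ℕ) < 2 ^ (k - 1) := by positivity
  have h2k : (2:ℕ) ^ k = 2 ^ (k - 1) + 2 ^ (k - 1) := by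
    conv_lhs => rw [show k = (k - 1) + 1 by omega]
    rw [pow_succ]; ring
  have hxX : x = X0 + 2 ^ k := by rw [hX0def, hxdef, pow_succ]; ring
  have hxc : x = (2 * p + 1) * 2 ^ k := by rw [hxdef, pow_succ]; ring
  have htzx : tz x = k := by rw [hxdef]; exact tz_form p k
  have hCWeq : CW x = x + 2 ^ (k - 1) := by rw [CW, htzx]
  have hCCWeq : CCW x = x - 2 ^ (k - 1) := by rw [CCW, htzx]
  have htzCW : tz (CW x) = k - 1 := by
    have h := tz_form (2 * p + 1) (k - 1)
    rw [show (k - 1) + 1 = k by omega] at h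
    rw [show (2 * p + 1) * 2 ^ k = X0 + 2 ^ k from by rw [hX0def]; ring] at h
    rw [show CW x = X0 + 2 ^ k + 2 ^ (k - 1) from by rw [hCWeq]; omega]
    exact h
  have htzCCW : tz (CCW x) = k - 1 := by
    have h := tz_form (2 * p) (k - 1)
    rw [show (k - 1) + 1 = k by omega] at h
    rw [show (2 * p) * 2 ^ k = X0 from hX0def.symm] at h
    rw [show CCW x = X0 + 2 ^ (k - 1) from by rw [hCCWeq]; omega]
    exact h
  have hCWpos : 0 < CW x := by rw [hCWeq]; omega
  have hCCWpos : 0 < CCW x := by rw [hCCWeq]; omega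
  have hvb := subtree_bound hvi hCWpos
  rw [htzCW] at hvb
  have hub := subtree_bound hvj hCCWpos
  rw [htzCCW] at hub
  have hv : x < pos a i ∧ pos a i < X0 + 2 ^ k + 2 ^ k := by
    rw [hCWeq] at hvb; omega
  have hu : X0 < pos a j ∧ pos a j < x := by
    rw [hCCWeq] at hub; omega
  have hpos0 : pos a 0 = 0 := by simp [pos]
  have hi0 : i ≠ 0 := by
    rintro rfl
    omega
  have hj0 : j ≠ 0 := by
    rintro rfl
    omega
  have hposi : pos a i = Pos (a (i - 1)) (a i) := by rw [pos, if_neg hi0]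
  have hposj : pos a j = Pos (a (j - 1)) (a j) := by rw [pos, if_neg hj0]
  have habi : a (i - 1) < a i := hmonolt (by omega) hiN
  have habj : a (j - 1) < a j := hmonolt (by omega) hjN
  have hmemi : a (i - 1) < pos a i ∧ pos a i ≤ a i := by
    rw [hposi]; exact (pos_key habi).1
  have hmemj : a (j - 1) < pos a j ∧ pos a j ≤ a j := by
    rw [hposj]; exact (pos_key habj).1
  -- the CCW-side peer's segment lies strictly below x
  have haj : a j < x := by
    by_contra h
    push_neg at h
    have hseg := seg_pos hxdef habj (lt_of_le_of_lt hmemj.1.le hu.2) h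
    refine no_mid (t := k) (c := 2 * p) (w := pos a j) ?_ ?_ ?_
    · rw [hposj]; exact hseg.1
    · rw [← hX0def]; exact hu.1
    · rw [show (2 * p + 1) * 2 ^ k = x from hxc.symm]; exact hu.2
  -- the CW-side peer's segment lies at or above x
  have hai : x ≤ a (i - 1) := by
    by_contra h
    push_neg at h
    have hseg := seg_pos hxdef habi h (le_trans hv.1.le hmemi.2)
    refine no_mid (t := k) (c := 2 * p + 1) (w := pos a i) ?_ ?_ ?_
    · rw [hposi]; exact hseg.1
    · rw [show (2 * p + 1) * 2 ^ k = x from hxc.symm]; exact hv.1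
    · rw [show (2 * p + 1 + 1) * 2 ^ k = X0 + 2 ^ k + 2 ^ k from by rw [hX0def]; ring]
      exact hv.2
  -- least index whose segment endpoint reaches x
  have hPex : ∃ t, x ≤ a t := ⟨i - 1, hai⟩
  set m := Nat.find hPex with hmdef
  have hmspec : x ≤ a m := Nat.find_spec hPex
  have hmle : m ≤ i - 1 := Nat.find_min' hPex hai
  have hmN : m ≤ N := le_trans hmle (le_trans (Nat.sub_le i 1) hiN)
  have hm0 : m ≠ 0 := by
    intro h
    have h1 : x ≤ a 0 := by rw [← h]; exact hmspec
    have h2 : a 0 ≤ a j := hmono' (Nat.zero_le j) hjN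
    omega
  have hm1 : a (m - 1) < x := by
    have := Nat.find_min hPex (show m - 1 < m by omega)
    omega
  have habm : a (m - 1) < a m := hmonolt (by omega) hmN
  have hsegm := seg_pos hxdef habm hm1 hmspec
  have hjm : j ≤ m - 1 := by
    by_contra h
    push_neg at h
    have : a m ≤ a j := hmono' (by omega) hjN
    omega
  have hlow : X0 < a (m - 1) :=
    lt_of_lt_of_le (lt_of_lt_of_le hu.1 hmemj.2) (hmono' hjm (by omega))
  have hup : a m < X0 + 2 ^ k + 2 ^ k := by
    have h1 : a m ≤ a (i - 1) := hmono' hmle (by omega)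
    omega
  have hposm : pos a m = Pos (a (m - 1)) (a m) := by rw [pos, if_neg hm0]
  have hweq : pos a m = x := by
    have hmid := mid_eq (t := k) (c := 2 * p) (w := pos a m)
      (by rw [hposm]; exact hsegm.1)
      (by rw [← hX0def]; exact lt_of_le_of_lt (le_of_lt hlow) (hposm ▸ hsegm.2.1))
      (by
        rw [show (2 * p + 2) * 2 ^ k = X0 + 2 ^ k + 2 ^ k from by rw [hX0def]; ring]
        exact lt_of_le_of_lt (hposm ▸ hsegm.2.2) hup)
    rw [hmid, show (2 * p + 1) * 2 ^ k = x from hxc.symm]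
  exact hnotocc ⟨m, hmN, hweq⟩
end
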